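/- arXiv:math/0105059 — 5 statements merged into one kernel-verified Lean document; each statement's English description precedes it below -/
import Mathlib

section
/- Let D be a ring of algebraic integers (the integral closure of ℤ in a number field), let d = r^s be a prime power, and let Z be an endomorphism of a free finitely generated D-module. Then Trace(Z^d) - (Trace(Z))^d lies in the ideal rD. -/
open NumberField Polynomial Matrix

theorem aux_map_trace_pow {S A : Type*} [CommRing S] [CommRing A] {n : Type*} [Fintype n]
    [DecidableEq n] (f : S →+* A) (N : Matrix n n S) (k : ℕ) :
    f (Matrix.trace (N ^ k)) = Matrix.trace (f.mapMatrix N ^ k) := by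
  rw [← map_pow f.mapMatrix]
  exact AddMonoidHom.map_trace f (N ^ k)

theorem aux_map_trace {S A : Type*} [CommRing S] [CommRing A] {n : Type*} [Fintype n]
    [DecidableEq n] (f : S →+* A) (N : Matrix n n S) :
    f (Matrix.trace N) = Matrix.trace (f.mapMatrix N) :=
  AddMonoidHom.map_trace f N

theorem trace_pow_char_field {F : Type*} [Field F] (p : ℕ) [Fact p.Prime] [CharP F p]
    {n : Type*} [Fintype n] [DecidableEq n] (M : Matrix n n F) :
    Matrix.trace (M ^ p) = Matrix.trace M ^ p := by
  have hp : 0 < p := (Fact.out : p.Prime).pos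
  cases isEmpty_or_nonempty n with
  | inl h => simp [Matrix.trace, zero_pow hp.ne']
  | inr h =>
    haveI : CharP (Matrix n n F) p := Matrix.charP p
    haveI : CharP F[X] p := inferInstance
    haveI : ExpChar (Matrix n n F)[X] p := ExpChar.prime Fact.out
    have key : (expand F p : F[X] →+* F[X]).mapMatrix (charmatrix (M ^ p))
        = charmatrix M ^ p := by
      apply matPolyEquiv.injective
      rw [map_pow, matPolyEquiv_charmatrix, matPolyEquiv_eq_X_pow_sub_C,
        sub_pow_char_of_commute p (Polynomial.commute_X (C M)), ← C_pow]
    have hchar : expand F p ((M ^ p).charpoly) = M.charpoly ^ p := by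
      have := congrArg Matrix.det key
      rwa [← RingHom.map_det, Matrix.det_pow] at this
    have hco : ((M ^ p).charpoly).coeff (Fintype.card n - 1)
        = (M.charpoly.coeff (Fintype.card n - 1)) ^ p := by
      have h2 : map (frobenius F p) (expand F p M.charpoly) = M.charpoly ^ p :=
        Polynomial.map_frobenius_expand p M.charpoly
      have := congrArg (fun f => Polynomial.coeff f (p * (Fintype.card n - 1)))
        (hchar.trans h2.symm)
      simpa [Polynomial.coeff_expand_mul' hp, Polynomial.coeff_map, frobenius_def] using this
    rw [Matrix.trace_eq_neg_charpoly_coeff, Matrix.trace_eq_neg_charpoly_coeff, hco,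
      neg_pow, neg_one_pow_char p (R := F), neg_one_mul]

theorem trace_pow_char_ring {R : Type*} [CommRing R] (p : ℕ) [Fact p.Prime] [CharP R p]
    {n : Type*} [Fintype n] [DecidableEq n] (M : Matrix n n R) :
    Matrix.trace (M ^ p) = Matrix.trace M ^ p := by
  classical
  set S := MvPolynomial (n × n) (ZMod p) with hS
  set F := FractionRing S with hF
  haveI : CharP F p := charP_of_injective_algebraMap (IsFractionRing.injective S F) p
  set G : Matrix n n S := Matrix.of fun i j => MvPolynomial.X (i, j) with hG
  have hgen : Matrix.trace (G ^ p) = Matrix.trace G ^ p := by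
    apply IsFractionRing.injective S F
    rw [map_pow, aux_map_trace_pow (algebraMap S F) G p, aux_map_trace (algebraMap S F) G]
    exact trace_pow_char_field p ((algebraMap S F).mapMatrix G)
  set φ : S →+* R := (MvPolynomial.eval₂Hom (ZMod.castHom dvd_rfl R) fun ij => M ij.1 ij.2)
  have hφG : φ.mapMatrix G = M := by
    ext i j
    show (MvPolynomial.eval₂Hom (ZMod.castHom dvd_rfl R) fun ij => M ij.1 ij.2)
      (MvPolynomial.X (i, j)) = M i j
    exact MvPolynomial.eval₂Hom_X' _ _ _
  have h2 := congrArg φ hgen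
  rw [map_pow, aux_map_trace_pow φ G p, aux_map_trace φ G, hφG] at h2
  exact h2

theorem trace_pow_char_pow_ring {R : Type*} [CommRing R] (p : ℕ) [Fact p.Prime] [CharP R p]
    {n : Type*} [Fintype n] [DecidableEq n] (M : Matrix n n R) (s : ℕ) :
    Matrix.trace (M ^ p ^ s) = Matrix.trace M ^ p ^ s := by
  induction s with
  | zero => simp
  | succ t ih =>
    rw [pow_succ, pow_mul, trace_pow_char_ring p (M ^ p ^ t), ih, ← pow_mul, ← pow_succ]

set_option synthInstance.maxHeartbeats 1000000 in
set_option maxHeartbeats 1000000 in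
/-- Let `D` be the ring of integers of a number field, `d = r^s` a prime power,
and `Z` an endomorphism of a free finitely generated `D`-module (a square matrix
over `D`).  Then `Trace(Z^d) - (Trace Z)^d` lies in the ideal `rD`. -/
theorem trace_pow_prime_pow_sub_pow_trace_mem_span
    (K : Type*) [Field K] [NumberField K]
    (n : ℕ) (Z : Matrix (Fin n) (Fin n) (𝓞 K))
    (r s : ℕ) (hr : r.Prime) (hs : 1 ≤ s) :
    Matrix.trace (Z ^ (r ^ s)) - (Matrix.trace Z) ^ (r ^ s) ∈
      Ideal.span {(r : 𝓞 K)} := by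
  haveI : Fact r.Prime := ⟨hr⟩
  set I : Ideal (𝓞 K) := Ideal.span {(r : 𝓞 K)} with hI
  -- `r` is not a unit in `𝓞 K`
  have hu : ¬ IsUnit ((r : ℕ) : 𝓞 K) := by
    rw [NumberField.isUnit_iff_norm]
    have h1 : ((RingOfIntegers.norm ℚ ((r : ℕ) : 𝓞 K) : 𝓞 ℚ) : ℚ)
        = Algebra.norm ℚ (algebraMap ℚ K (r : ℚ)) := by
      rw [RingOfIntegers.coe_norm]
      norm_num
    rw [h1, Algebra.norm_algebraMap]
    have hd : 0 < Module.finrank ℚ K := Module.finrank_pos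
    have : (1 : ℚ) < (r : ℚ) ^ Module.finrank ℚ K := by
      apply one_lt_pow₀ _ hd.ne'
      exact_mod_cast hr.one_lt
    rw [abs_of_pos (by positivity)]
    exact ne_of_gt this
  have hItop : I ≠ ⊤ := by
    rw [hI, Ne, Ideal.span_singleton_eq_top]
    exact hu
  haveI : Nontrivial (𝓞 K ⧸ I) := Ideal.Quotient.nontrivial_iff.mpr hItop
  have hr0 : ((r : ℕ) : 𝓞 K ⧸ I) = 0 := by
    rw [← map_natCast (Ideal.Quotient.mk I), Ideal.Quotient.eq_zero_iff_mem]
    exact Ideal.mem_span_singleton_self _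
  haveI : CharP (𝓞 K ⧸ I) r := by
    have hdvd : ringChar (𝓞 K ⧸ I) ∣ r := (ringChar.spec _ r).mp hr0
    rcases (Nat.Prime.eq_one_or_self_of_dvd hr _ hdvd) with h1 | h1
    · exfalso
      have : ((1 : ℕ) : 𝓞 K ⧸ I) = 0 :=
        (CharP.cast_eq_zero_iff _ (ringChar _) 1).mpr (by rw [h1])
      simpa using this
    · exact h1 ▸ ringChar.charP _
  rw [← Ideal.Quotient.eq_zero_iff_mem, map_sub,
    aux_map_trace_pow (Ideal.Quotient.mk I) Z (r ^ s), map_pow,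
    aux_map_trace (Ideal.Quotient.mk I) Z,
    trace_pow_char_pow_ring r ((Ideal.Quotient.mk I).mapMatrix Z) s, sub_self]
end

section
/- Let D be a Dedekind domain with class group C(D), and let M, N be finitely generated projective D-modules of the same rank. M is isomorphic to N if and only if the Steinitz classes of M and N in C(D) are equal. In particular M is free if and only if its Steinitz class is trivial. -/
open nonZeroDivisors

section Aux

variable {D : Type*} [CommRing D] [IsDomain D]

/-- Two elements of isomorphic submodules of the fraction field "cross-multiply". -/
lemma aux_mul_comm_of_linear {K : Type*} [Field K] [Algebra D K] [IsFractionRing D K]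
    {A B : Submodule D K} (f : A →ₗ[D] B) (a b : A) :
    (a : K) * (f b : K) = (b : K) * (f a : K) := by
  obtain ⟨⟨ra, sa⟩, hra⟩ := IsLocalization.surj D⁰ (a : K)
  obtain ⟨⟨rb, sb⟩, hrb⟩ := IsLocalization.surj D⁰ (b : K)
  have hsa : algebraMap D K (sa : D) ≠ 0 :=
    IsFractionRing.to_map_ne_zero_of_mem_nonZeroDivisors sa.2
  have hsb : algebraMap D K (sb : D) ≠ 0 :=
    IsFractionRing.to_map_ne_zero_of_mem_nonZeroDivisors sb.2
  have key : (ra * (sb : D)) • b = (rb * (sa : D)) • a := by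
    apply Subtype.ext
    show (ra * (sb : D)) • (b : K) = (rb * (sa : D)) • (a : K)
    rw [Algebra.smul_def, Algebra.smul_def, map_mul, map_mul, ← hra, ← hrb]
    ring
  have key2 := congrArg (fun z => ((f z : K))) key
  simp only [map_smul, Submodule.coe_smul, Algebra.smul_def, map_mul, ← hra, ← hrb] at key2
  -- key2 : a * sa * sb * f b = b * sb * sa * f a  (up to assoc)
  apply mul_left_cancel₀ hsa
  apply mul_left_cancel₀ hsb
  calc algebraMap D K (sb:D) * (algebraMap D K (sa:D) * ((a:K) * (f b : K)))
      = (a : K) * algebraMap D K (sa:D) * algebraMap D K (sb:D) * (f b : K) := by ring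
    _ = (b : K) * algebraMap D K (sb:D) * algebraMap D K (sa:D) * (f a : K) := key2
    _ = algebraMap D K (sb:D) * (algebraMap D K (sa:D) * ((b:K) * (f a : K))) := by ring

/-- An isomorphism between submodules of the fraction field is multiplication by a scalar. -/
lemma aux_iso_shift {K : Type*} [Field K] [Algebra D K] [IsFractionRing D K]
    {A B : Submodule D K} (e : A ≃ₗ[D] B) (hA : A ≠ ⊥) :
    ∃ x : K, x ≠ 0 ∧ B = Submodule.map (LinearMap.mulLeft D x) A := by
  obtain ⟨a, haA, ha0⟩ := Submodule.ne_bot_iff A |>.mp hA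
  set a₀ : A := ⟨a, haA⟩ with ha₀
  have hea : (e a₀ : K) ≠ 0 := by
    intro h
    apply ha0
    have : e a₀ = 0 := Subtype.ext h
    have := e.injective (this.trans (map_zero e).symm)
    simpa [ha₀, Subtype.ext_iff] using this
  refine ⟨(e a₀ : K) / a, div_ne_zero hea ha0, ?_⟩
  have hval : ∀ b : A, (e b : K) = (e a₀ : K) / a * (b : K) := by
    intro b
    have := aux_mul_comm_of_linear (e : A →ₗ[D] B) a₀ b
    field_simp
    calc (e b : K) * a = a * (e b : K) := by ring
      _ = (b : K) * (e a₀ : K) := this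
      _ = (e a₀ : K) * (b:K) := by ring
  ext y
  simp only [Submodule.mem_map, LinearMap.mulLeft_apply]
  constructor
  · intro hy
    refine ⟨(e.symm ⟨y, hy⟩ : K), (e.symm ⟨y, hy⟩).2, ?_⟩
    have := hval (e.symm ⟨y, hy⟩)
    rw [e.apply_symm_apply] at this
    exact this.symm
  · rintro ⟨b, hb, rfl⟩
    rw [← hval ⟨b, hb⟩]
    exact (e ⟨b, hb⟩).2

variable {k : ℕ}

/-- The distinguished "basis-like" family in `D^k × I`. -/
noncomputable def auxE (I : Ideal D) {a : D} (ha : a ∈ I) : Fin (k + 1) → (Fin k → D) × I :=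
  Fin.snoc (fun i => (Pi.single i 1, 0)) (0, ⟨a, ha⟩)

/-- An alternating `(k+1)`-form on `D^k × I` vanishing on the distinguished family is zero. -/
lemma aux_alt_ext {I : Ideal D} {a : D} (ha : a ∈ I) (ha0 : a ≠ 0)
    (φ : ((Fin k → D) × I) [⋀^Fin (k + 1)]→ₗ[D] D)
    (h0 : φ (auxE I ha) = 0) : φ = 0 := by
  set E := auxE I ha with hE
  ext v
  set c : Fin (k + 1) → Fin (k + 1) → D :=
    fun i => Fin.snoc (fun j' => a * (v i).1 j') ((v i).2 : D) with hc
  have hsplit : ∀ i, a • v i = ∑ j, c i j • E j := by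
    intro i
    rw [Fin.sum_univ_castSucc]
    simp only [hc, hE, auxE, Fin.snoc_castSucc, Fin.snoc_last]
    refine Prod.ext ?_ ?_
    · simp only [Prod.fst_add, Prod.fst_sum, Prod.smul_fst, Prod.fst_zero, smul_zero,
        add_zero, Prod.smul_snd]
      funext i'
      simp only [Finset.sum_apply, Pi.smul_apply, Pi.single_apply, smul_eq_mul,
        mul_ite, mul_one, mul_zero, Finset.sum_ite_eq, Finset.mem_univ, if_true]
    · simp only [Prod.snd_add, Prod.snd_sum, Prod.smul_snd, Prod.snd_zero, smul_zero,
        Finset.sum_const_zero, zero_add]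
      apply Subtype.ext
      simp [mul_comm]
  have hzero : ∀ r : Fin (k + 1) → Fin (k + 1), φ (E ∘ r) = 0 := by
    intro r
    by_cases hr : Function.Injective r
    · have hbij : Function.Bijective r := Finite.injective_iff_bijective.mp hr
      have : E ∘ r = E ∘ (Equiv.ofBijective r hbij) := rfl
      rw [this, φ.map_perm, h0, smul_zero]
    · obtain ⟨i, j, hij, hne⟩ := Function.not_injective_iff.mp hr
      exact φ.map_eq_zero_of_eq _ (show (E ∘ r) i = (E ∘ r) j from congrArg E hij) hne
  have h1 : (a ^ (k + 1)) • φ v = 0 := by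
    have key : φ.toMultilinearMap (fun i => a • v i) = 0 := by
      rw [funext hsplit, φ.toMultilinearMap.map_sum (fun i j => c i j • E j)]
      refine Finset.sum_eq_zero fun r _ => ?_
      rw [φ.toMultilinearMap.map_smul_univ (fun i => c i (r i)) (fun i => E (r i))]
      have h4 : φ.toMultilinearMap (fun i => E (r i)) = φ (E ∘ r) := rfl
      rw [h4, hzero r, smul_zero]
    have e1 : φ.toMultilinearMap (fun i => a • v i) = (a ^ (k + 1)) • φ v := by
      rw [φ.toMultilinearMap.map_smul_univ (fun _ => a) v]
      simp [Finset.prod_const]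
    rw [← e1, key]
  rcases smul_eq_zero.mp h1 with h | h
  · exact absurd h (pow_ne_zero _ ha0)
  · simpa using h

end Aux
section Phi

variable {D : Type*} [CommRing D] [IsDomain D] {k : ℕ}

/-- The linear functional sending an alternating `(k+1)`-form `φ` on `D^k × I`
to `φ(e₁,…,e_k,(0,a)) / a ∈ Frac D`. -/
noncomputable def auxPhi (I : Ideal D) {a : D} (ha : a ∈ I) :
    ((((Fin k → D) × I) [⋀^Fin (k + 1)]→ₗ[D] D)) →ₗ[D] FractionRing D where
  toFun φ := (algebraMap D (FractionRing D) a)⁻¹ *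
    algebraMap D (FractionRing D) (φ (auxE I ha))
  map_add' φ ψ := by simp [mul_add]
  map_smul' d φ := by
    simp only [AlternatingMap.smul_apply, smul_eq_mul, map_mul, RingHom.id_apply,
      Algebra.smul_def]
    ring

lemma auxPhi_mul (I : Ideal D) {a : D} (ha : a ∈ I) (ha0 : a ≠ 0)
    (φ : (((Fin k → D) × I) [⋀^Fin (k + 1)]→ₗ[D] D)) {b : D} (hb : b ∈ I) :
    auxPhi I ha φ * algebraMap D (FractionRing D) b =
      algebraMap D (FractionRing D)
        (φ (Function.update (auxE I ha) (Fin.last k) (0, ⟨b, hb⟩))) := by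
  have key : b • φ (auxE I ha) =
      a • φ (Function.update (auxE I ha) (Fin.last k) ((0 : Fin k → D), (⟨b, hb⟩ : I))) := by
    have h1 : auxE I ha (Fin.last k) = ((0 : Fin k → D), (⟨a, ha⟩ : I)) := by
      simp [auxE]
    have h2 : φ (auxE I ha) =
        φ (Function.update (auxE I ha) (Fin.last k) ((0 : Fin k → D), (⟨a, ha⟩ : I))) := by
      rw [← h1, Function.update_eq_self]
    rw [h2]
    have h3 : (b • ((0 : Fin k → D), (⟨a, ha⟩ : I))) = (a • ((0 : Fin k → D), (⟨b, hb⟩ : I))) := by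
      refine Prod.ext (by simp) ?_
      apply Subtype.ext
      simp [mul_comm]
    calc b • φ (Function.update (auxE I ha) (Fin.last k) ((0 : Fin k → D), (⟨a, ha⟩ : I)))
        = φ (Function.update (auxE I ha) (Fin.last k) (b • ((0 : Fin k → D), (⟨a, ha⟩ : I)))) := by
          rw [φ.map_update_smul]
      _ = φ (Function.update (auxE I ha) (Fin.last k) (a • ((0 : Fin k → D), (⟨b, hb⟩ : I)))) := by
          rw [h3]
      _ = a • φ (Function.update (auxE I ha) (Fin.last k) ((0 : Fin k → D), (⟨b, hb⟩ : I))) := by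
          rw [φ.map_update_smul]
  have ha' : algebraMap D (FractionRing D) a ≠ 0 := by
    simpa using fun h => ha0 (IsFractionRing.injective D (FractionRing D) (by simpa using h))
  have keyK := congrArg (algebraMap D (FractionRing D)) key
  simp only [smul_eq_mul, map_mul] at keyK
  rw [auxPhi]
  simp only [LinearMap.coe_mk, AddHom.coe_mk]
  field_simp
  calc algebraMap D (FractionRing D) (φ (auxE I ha)) * algebraMap D (FractionRing D) b
      = algebraMap D (FractionRing D) b * algebraMap D (FractionRing D) (φ (auxE I ha)) := by ring
    _ = algebraMap D (FractionRing D) a *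
        algebraMap D (FractionRing D)
          (φ (Function.update (auxE I ha) (Fin.last k) (0, ⟨b, hb⟩))) := keyK
    _ = _ := by ring

lemma auxPhi_injective (I : Ideal D) {a : D} (ha : a ∈ I) (ha0 : a ≠ 0) :
    Function.Injective (auxPhi (k := k) I ha) := by
  rw [injective_iff_map_eq_zero]
  intro φ hφ
  rw [auxPhi] at hφ
  simp only [LinearMap.coe_mk, AddHom.coe_mk, mul_eq_zero, inv_eq_zero] at hφ
  have ha' : algebraMap D (FractionRing D) a ≠ 0 := by
    simpa using fun h => ha0 (IsFractionRing.injective D (FractionRing D) (by simpa using h))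
  rcases hφ with h | h
  · exact absurd h ha'
  · have : φ (auxE I ha) = 0 := IsFractionRing.injective D (FractionRing D) (by simpa using h)
    exact aux_alt_ext ha ha0 φ this

end Phi
section Range

variable {D : Type*} [CommRing D] [IsDomain D] [IsDedekindDomain D] {k : ℕ}

lemma auxPhi_range (I : Ideal D) {a : D} (ha : a ∈ I) (ha0 : a ≠ 0) :
    LinearMap.range (auxPhi (k := k) I ha) =
      ((((I : FractionalIdeal D⁰ (FractionRing D))⁻¹ : FractionalIdeal D⁰ (FractionRing D))) :
        Submodule D (FractionRing D)) := by
  have hIbot : I ≠ ⊥ := fun h => ha0 (by simpa [h] using ha)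
  have hI0 : (I : FractionalIdeal D⁰ (FractionRing D)) ≠ 0 :=
    FractionalIdeal.coeIdeal_ne_zero.mpr hIbot
  have ha' : algebraMap D (FractionRing D) a ≠ 0 := by
    simpa using fun h => ha0 (IsFractionRing.injective D (FractionRing D) (by simpa using h))
  apply le_antisymm
  · rintro _ ⟨φ, rfl⟩
    rw [FractionalIdeal.mem_coe, FractionalIdeal.mem_inv_iff hI0]
    intro y hy
    obtain ⟨b, hb, rfl⟩ := (FractionalIdeal.mem_coeIdeal _).mp hy
    rw [auxPhi_mul I ha ha0 φ hb]
    exact (FractionalIdeal.mem_one_iff _).mpr ⟨_, rfl⟩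
  · intro c hc
    rw [FractionalIdeal.mem_coe, FractionalIdeal.mem_inv_iff hI0] at hc
    -- build the linear map g : I →ₗ[D] D with algebraMap (g x) = c * algebraMap x
    set L : D →ₗ[D] FractionRing D := Algebra.linearMap D (FractionRing D) with hL
    have hinj : Function.Injective L := IsFractionRing.injective D (FractionRing D)
    set g0 : I →ₗ[D] FractionRing D := c • (L.comp (Submodule.subtype I)) with hg0def
    have hg0 : ∀ x : I, g0 x ∈ LinearMap.range L := by
      intro x
      have hmem : algebraMap D (FractionRing D) (x : D) ∈
          (I : FractionalIdeal D⁰ (FractionRing D)) :=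
        (FractionalIdeal.mem_coeIdeal _).mpr ⟨x, x.2, rfl⟩
      obtain ⟨d, hd⟩ := (FractionalIdeal.mem_one_iff _).mp (hc _ hmem)
      exact ⟨d, by simpa [hg0def, hL, Algebra.smul_def] using hd⟩
    set g : I →ₗ[D] D :=
      ((LinearEquiv.ofInjective L hinj).symm.toLinearMap).comp (g0.codRestrict _ hg0) with hgdef
    have hg : ∀ x : I, algebraMap D (FractionRing D) (g x) = c * algebraMap D (FractionRing D) (x : D) := by
      intro x
      have h1 : L (g x) = g0 x := by
        have h2 := (LinearEquiv.ofInjective L hinj).apply_symm_apply ⟨g0 x, hg0 x⟩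
        have h3 : ((LinearEquiv.ofInjective L hinj)
            ((LinearEquiv.ofInjective L hinj).symm ⟨g0 x, hg0 x⟩) : FractionRing D) = g0 x := by
          rw [h2]
        rwa [LinearEquiv.ofInjective_apply] at h3
      simpa [hL, hg0def, Algebra.smul_def] using h1
    -- the determinant form
    set T : ((Fin k → D) × I) →ₗ[D] (Fin (k + 1) → D) :=
      LinearMap.pi (Fin.lastCases (motive := fun _ => ((Fin k → D) × I) →ₗ[D] D)
        (g.comp (LinearMap.snd D (Fin k → D) I))
        (fun i => (LinearMap.proj i).comp (LinearMap.fst D (Fin k → D) I))) with hTdef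
    have hT : ∀ (v : (Fin k → D) × I) (j : Fin (k + 1)),
        T v j = Fin.lastCases (motive := fun _ => D) (g v.2) (fun i => v.1 i) j := by
      intro v j
      refine Fin.lastCases ?_ (fun i => ?_) j <;>
        simp [hTdef, LinearMap.pi_apply, Fin.lastCases_last, Fin.lastCases_castSucc]
    set φc : (((Fin k → D) × I) [⋀^Fin (k + 1)]→ₗ[D] D) :=
      ((Pi.basisFun D (Fin (k + 1))).det).compLinearMap T with hφc
    refine ⟨φc, ?_⟩
    have hmat : (Pi.basisFun D (Fin (k + 1))).toMatrix (fun i => T (auxE I ha i)) =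
        Matrix.diagonal (Fin.snoc (fun _ => (1 : D)) (g ⟨a, ha⟩)) := by
      ext i j
      rw [Module.Basis.toMatrix_apply, Pi.basisFun_repr]
      refine Fin.lastCases ?_ (fun j' => ?_) j
      · rw [hT]
        simp only [auxE, Fin.snoc_last, Fin.lastCases_last]
        refine Fin.lastCases ?_ (fun i' => ?_) i
        · simp [Matrix.diagonal_apply, Fin.snoc_last]
        · simp [Matrix.diagonal_apply, (Fin.castSucc_lt_last i').ne, Fin.lastCases_castSucc]
      · rw [hT]
        simp only [auxE, Fin.snoc_castSucc]
        refine Fin.lastCases ?_ (fun i' => ?_) i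
        · simp [Matrix.diagonal_apply, (Fin.castSucc_lt_last j').ne', Fin.lastCases_last, map_zero]
        · by_cases hij : i' = j'
          · subst hij
            simp [Matrix.diagonal_apply, Fin.lastCases_castSucc, Fin.snoc_castSucc]
          · simp [Matrix.diagonal_apply, Fin.lastCases_castSucc, Pi.single_apply, hij,
              fun h => hij (Fin.castSucc_inj.mp h)]
    have hdet : φc (auxE I ha) = g ⟨a, ha⟩ := by
      rw [hφc]
      simp only [AlternatingMap.compLinearMap_apply]
      rw [Module.Basis.det_apply, hmat, Matrix.det_diagonal]
      simp [Fin.prod_snoc]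
    show auxPhi I ha φc = c
    rw [auxPhi]
    simp only [LinearMap.coe_mk, AddHom.coe_mk]
    rw [hdet, hg ⟨a, ha⟩]
    field_simp

end Range
section Main

variable {D : Type*} [CommRing D] [IsDomain D] [IsDedekindDomain D] {k : ℕ}

/-- pointwise smul of a submodule of the fraction field is `map (mulLeft x)`. -/
lemma aux_smul_map {K : Type*} [Field K] [Algebra D K] (x : K) (S : Submodule D K) :
    Submodule.span D {x} * S = Submodule.map (LinearMap.mulLeft D x) S := by
  rw [Submodule.span_singleton_mul]
  ext y
  simp only [Submodule.mem_map, LinearMap.mulLeft_apply]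
  constructor
  · intro hy
    rw [← SetLike.mem_coe, Submodule.coe_pointwise_smul] at hy
    obtain ⟨s, hs, hxy⟩ := hy
    exact ⟨s, hs, by simpa using hxy⟩
  · rintro ⟨s, hs, rfl⟩
    have := Submodule.smul_mem_pointwise_smul s x S hs
    simpa [smul_eq_mul] using this

lemma aux_hard (I J : (Ideal D)⁰)
    (e : ((Fin k → D) × (I : Ideal D)) ≃ₗ[D] ((Fin k → D) × (J : Ideal D))) :
    ClassGroup.mk0 I = ClassGroup.mk0 J := by
  have hIbot : (I : Ideal D) ≠ ⊥ := mem_nonZeroDivisors_iff_ne_zero.mp I.2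
  have hJbot : (J : Ideal D) ≠ ⊥ := mem_nonZeroDivisors_iff_ne_zero.mp J.2
  obtain ⟨a, haI, ha0⟩ := (Submodule.ne_bot_iff _).mp hIbot
  obtain ⟨b, hbJ, hb0⟩ := (Submodule.ne_bot_iff _).mp hJbot
  have hI0 : ((I : Ideal D) : FractionalIdeal D⁰ (FractionRing D)) ≠ 0 :=
    FractionalIdeal.coeIdeal_ne_zero.mpr hIbot
  have hJ0 : ((J : Ideal D) : FractionalIdeal D⁰ (FractionRing D)) ≠ 0 :=
    FractionalIdeal.coeIdeal_ne_zero.mpr hJbot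
  -- the induced isomorphism on top alternating forms
  let eforms := AlternatingMap.domLCongr D D (Fin (k + 1)) D e
  let big : (LinearMap.range (auxPhi (k := k) (I : Ideal D) haI) : Submodule D (FractionRing D))
      ≃ₗ[D] (LinearMap.range (auxPhi (k := k) (J : Ideal D) hbJ) : Submodule D (FractionRing D)) :=
    ((LinearEquiv.ofInjective _ (auxPhi_injective (I : Ideal D) haI ha0)).symm.trans
      eforms).trans (LinearEquiv.ofInjective _ (auxPhi_injective (J : Ideal D) hbJ hb0))
  have hAbot : (LinearMap.range (auxPhi (k := k) (I : Ideal D) haI)) ≠ ⊥ := by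
    rw [auxPhi_range (I : Ideal D) haI ha0]
    intro h
    exact inv_ne_zero hI0 (by
      apply FractionalIdeal.coeToSubmodule_injective
      simpa using h)
  obtain ⟨x, hx0, hmap⟩ := aux_iso_shift big hAbot
  rw [auxPhi_range (I : Ideal D) haI ha0, auxPhi_range (J : Ideal D) hbJ hb0] at hmap
  have hfr : ((J : Ideal D) : FractionalIdeal D⁰ (FractionRing D))⁻¹ =
      FractionalIdeal.spanSingleton D⁰ x * ((I : Ideal D) : FractionalIdeal D⁰ (FractionRing D))⁻¹ := by
    apply FractionalIdeal.coeToSubmodule_injective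
    beta_reduce
    rw [FractionalIdeal.coe_mul, FractionalIdeal.coe_spanSingleton, aux_smul_map, hmap]
  have hfinal : FractionalIdeal.spanSingleton D⁰ x⁻¹ *
      ((I : Ideal D) : FractionalIdeal D⁰ (FractionRing D)) =
      ((J : Ideal D) : FractionalIdeal D⁰ (FractionRing D)) := by
    have h2 := congrArg (·⁻¹) hfr
    simp only [mul_inv, inv_inv, FractionalIdeal.spanSingleton_inv] at h2
    exact h2.symm
  rw [ClassGroup.mk0_eq_mk0_iff_exists_fraction_ring (FractionRing D)]
  exact ⟨x⁻¹, inv_ne_zero hx0, hfinal⟩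

lemma aux_easy (I J : (Ideal D)⁰) (h : ClassGroup.mk0 I = ClassGroup.mk0 J) :
    Nonempty (((Fin k → D) × (I : Ideal D)) ≃ₗ[D] ((Fin k → D) × (J : Ideal D))) := by
  obtain ⟨x, hx0, hxIJ⟩ := (ClassGroup.mk0_eq_mk0_iff_exists_fraction_ring (FractionRing D)).mp h
  set L : D →ₗ[D] FractionRing D := Algebra.linearMap D (FractionRing D) with hL
  have hinj : Function.Injective L := IsFractionRing.injective D (FractionRing D)
  have hmulinj : Function.Injective (LinearMap.mulLeft D x) := by
    intro s t hst
    exact mul_left_cancel₀ hx0 hst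
  have hsub : Submodule.map (LinearMap.mulLeft D x) (Submodule.map L (I : Ideal D)) =
      Submodule.map L (J : Ideal D) := by
    have h1 := congrArg (FractionalIdeal.coeToSubmodule) hxIJ
    rw [FractionalIdeal.coe_mul, FractionalIdeal.coe_spanSingleton, aux_smul_map,
      FractionalIdeal.coe_coeIdeal, FractionalIdeal.coe_coeIdeal] at h1
    rw [show IsLocalization.coeSubmodule (FractionRing D) (I : Ideal D) =
        Submodule.map L (I : Ideal D) from rfl,
      show IsLocalization.coeSubmodule (FractionRing D) (J : Ideal D) =
        Submodule.map L (J : Ideal D) from rfl] at h1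
    exact h1
  let e1 : (I : Ideal D) ≃ₗ[D] Submodule.map L (I : Ideal D) :=
    Submodule.equivMapOfInjective L hinj (I : Ideal D)
  let e1J : (J : Ideal D) ≃ₗ[D] Submodule.map L (J : Ideal D) :=
    Submodule.equivMapOfInjective L hinj (J : Ideal D)
  let e2 : (Submodule.map L (I : Ideal D)) ≃ₗ[D]
      Submodule.map (LinearMap.mulLeft D x) (Submodule.map L (I : Ideal D)) :=
    Submodule.equivMapOfInjective (LinearMap.mulLeft D x) hmulinj _
  exact ⟨LinearEquiv.prodCongr (LinearEquiv.refl D (Fin k → D))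
    (e1.trans ((e2.trans (LinearEquiv.ofEq _ _ hsub)).trans e1J.symm))⟩

lemma aux_key (I J : (Ideal D)⁰) :
    Nonempty (((Fin k → D) × (I : Ideal D)) ≃ₗ[D] ((Fin k → D) × (J : Ideal D))) ↔
      ClassGroup.mk0 I = ClassGroup.mk0 J :=
  ⟨fun ⟨e⟩ => aux_hard I J e, aux_easy I J⟩

/-- `D^(k+1) ≃ D^k × D` linearly. -/
noncomputable def auxPiSucc (D : Type*) [CommRing D] (k : ℕ) :
    (Fin (k + 1) → D) ≃ₗ[D] (Fin k → D) × D :=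
  LinearEquiv.ofLinear
    (LinearMap.prod (LinearMap.funLeft D D Fin.castSucc) (LinearMap.proj (Fin.last k)))
    (LinearMap.pi (Fin.lastCases (motive := fun _ => ((Fin k → D) × D) →ₗ[D] D)
      (LinearMap.snd D (Fin k → D) D)
      (fun i => (LinearMap.proj i).comp (LinearMap.fst D (Fin k → D) D))))
    (by
      apply LinearMap.ext
      intro w
      refine Prod.ext ?_ ?_
      · funext i
        simp [LinearMap.funLeft_apply, LinearMap.pi_apply, Fin.lastCases_castSucc]
      · simp [LinearMap.pi_apply, Fin.lastCases_last])
    (by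
      apply LinearMap.ext
      intro v
      funext j
      refine Fin.lastCases ?_ (fun j' => ?_) j <;>
        simp [LinearMap.funLeft_apply, LinearMap.pi_apply, Fin.lastCases_last,
          Fin.lastCases_castSucc])

/-- The unit ideal as an element of `(Ideal D)⁰`. -/
noncomputable def auxOne : (Ideal D)⁰ := ⟨1, one_mem _⟩

lemma auxOne_mk0 : ClassGroup.mk0 (auxOne (D := D)) = 1 := by
  rw [auxOne, ClassGroup.mk0_eq_one_iff]
  exact ⟨⟨1, (Ideal.one_eq_top).trans (Ideal.span_singleton_one).symm⟩⟩

noncomputable def auxOneEquiv :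
    (Fin (k + 1) → D) ≃ₗ[D] ((Fin k → D) × ((auxOne (D := D) : Ideal D))) :=
  (auxPiSucc D k).trans (LinearEquiv.prodCongr (LinearEquiv.refl D (Fin k → D))
    ((LinearEquiv.ofEq _ _
      (show ((auxOne (D := D)) : Ideal D) = ⊤ from Ideal.one_eq_top)).trans
      Submodule.topEquiv).symm)

end Main

/-- Classification of finitely generated projective modules over a Dedekind domain
by rank and Steinitz class: if `M ≅ D^k ⊕ I` and `N ≅ D^k ⊕ J` (so `M` and `N`
have the same rank), then `M ≅ N` if and only if the ideal classes of `I` and `J`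
in the class group of `D` coincide.  (The class of `I` is the Steinitz class of
`M`.)  In particular `M` is free iff its Steinitz class is trivial. -/
theorem iso_iff_steinitz_class_eq
    (D : Type*) [CommRing D] [IsDomain D] [IsDedekindDomain D]
    (M N : Type*) [AddCommGroup M] [Module D M] [AddCommGroup N] [Module D N]
    [Module.Finite D M] [Module.Projective D M]
    [Module.Finite D N] [Module.Projective D N]
    (k : ℕ) (I J : (Ideal D)⁰)
    (eM : M ≃ₗ[D] ((Fin k → D) × (I : Ideal D)))
    (eN : N ≃ₗ[D] ((Fin k → D) × (J : Ideal D))) :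
    (Nonempty (M ≃ₗ[D] N) ↔ ClassGroup.mk0 I = ClassGroup.mk0 J) ∧
      (Nonempty (M ≃ₗ[D] (Fin (k + 1) → D)) ↔ ClassGroup.mk0 I = 1) := by
  constructor
  · constructor
    · rintro ⟨f⟩
      exact aux_hard I J ((eM.symm.trans f).trans eN)
    · intro h
      obtain ⟨g⟩ := aux_easy I J h
      exact ⟨(eM.trans g).trans eN.symm⟩
  · constructor
    · rintro ⟨f⟩
      have := aux_hard I (auxOne) ((eM.symm.trans f).trans auxOneEquiv)
      rwa [auxOne_mk0] at this
    · intro h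
      obtain ⟨g⟩ := aux_easy I auxOne (by rw [auxOne_mk0]; exact h)
      exact ⟨(eM.trans g).trans auxOneEquiv.symm⟩
end

section
/- Let D be a Dedekind domain, j : D → D' an injective ring homomorphism into another Dedekind domain D' making D' a flat D-algebra, and M a finitely generated projective D-module. Then the Steinitz class of M ⊗_D D' equals the image of the Steinitz class of M under the induced map on class groups C(D) → C(D') sending [I] to [ID']. -/
open nonZeroDivisors
section
variable {R : Type*} [CommRing R] [IsDomain R] {k : ℕ}
local notation "K" => FractionRing R
local notation "ι" => Sum (Fin k) Unit

/-- Embedding of `R^k × C` into `K^(k+1)`. -/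
noncomputable def emb (C : Ideal R) : ((Fin k → R) × C) →ₗ[R] (ι → K) where
  toFun p := Sum.elim (fun i => algebraMap R K (p.1 i)) (fun _ => algebraMap R K (p.2 : R))
  map_add' p q := by funext i; cases i <;> simp
  map_smul' r p := by funext i; cases i <;> simp [Algebra.smul_def]

lemma emb_injective (C : Ideal R) : Function.Injective (emb (k := k) C) := by
  intro p q h
  have hinj : Function.Injective (algebraMap R K) := IsFractionRing.injective R K
  have h1 : ∀ i, algebraMap R K (p.1 i) = algebraMap R K (q.1 i) := fun i =>
    congrFun h (Sum.inl i)
  have h2 : algebraMap R K (p.2 : R) = algebraMap R K (q.2 : R) := congrFun h (Sum.inr ())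
  ext i
  · exact hinj (h1 i)
  · exact hinj h2

/-- The "diagonal" tuple in `R^k × C`. -/
def xdiag (C : Ideal R) (c : C) : ι → ((Fin k → R) × C) :=
  Sum.elim (fun i => (Pi.single i 1, 0)) (fun _ => (0, c))

end
section
set_option linter.unusedSectionVars false
variable {R : Type*} [CommRing R] [IsDomain R] {k : ℕ}
local notation "K" => FractionRing R
local notation "ι" => Sum (Fin k) Unit
local notation "ω" => Module.Basis.det (Pi.basisFun K ι)

lemma omega_eq (v : ι → (ι → K)) :
    ω v = Matrix.det (Matrix.of fun i j => v j i) := by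
  rw [Module.Basis.det_apply]
  congr 1

lemma omega_diag (C : Ideal R) (c : C) :
    ω (fun j => emb C (xdiag C c j)) = algebraMap R K (c : R) := by
  rw [omega_eq]
  have : (Matrix.of fun i j => emb (k := k) C (xdiag C c j) i) =
      Matrix.diagonal (Sum.elim (fun _ : Fin k => (1 : K)) (fun _ => algebraMap R K (c : R))) := by
    ext i j
    rcases j with j | j <;> rcases i with i | i <;>
      simp [emb, xdiag, Matrix.diagonal, Pi.single_apply, eq_comm]
  rw [this, Matrix.det_diagonal, Fintype.prod_sum_type]
  simp

lemma omega_mem (B : Ideal R) (y : ι → ((Fin k → R) × B)) :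
    ∃ b : R, b ∈ B ∧ ω (fun j => emb B (y j)) = algebraMap R K b := by
  classical
  set N : Matrix ι ι R := fun i j =>
    Sum.elim (fun i' => (y j).1 i') (fun _ => ((y j).2 : R)) i with hN
  have hmat : (Matrix.of fun i j => emb (k := k) B (y j) i) =
      (algebraMap R K).mapMatrix N := by
    ext i j
    rcases i with i | i <;> simp [emb, N] <;> rfl
  refine ⟨N.det, ?_, ?_⟩
  · rw [Matrix.det_apply]
    refine Submodule.sum_mem _ fun σ _ => ?_
    have h0 : N (σ (σ⁻¹ (Sum.inr ()))) (σ⁻¹ (Sum.inr ())) ∈ B := by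
      simp only [Equiv.Perm.inv_def, Equiv.apply_symm_apply]
      exact ((y (σ⁻¹ (Sum.inr ()))).2).2
    have hprod : ∏ i : ι, N (σ i) i ∈ B := by
      rw [← Finset.mul_prod_erase Finset.univ _ (Finset.mem_univ (σ⁻¹ (Sum.inr ())))]
      exact Ideal.mul_mem_right _ _ h0
    rcases Int.units_eq_one_or σ.sign with h | h
    · rw [h, one_smul]; exact hprod
    · rw [h, Units.smul_def]
      simpa using B.neg_mem hprod
  · rw [omega_eq, hmat, ← RingHom.map_det]

end
section
set_option linter.unusedSectionVars false
variable {R : Type*} [CommRing R] [IsDomain R] {k : ℕ}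
local notation "K" => FractionRing R
local notation "ι" => Sum (Fin k) Unit
local notation "ω" => Module.Basis.det (Pi.basisFun K ι)

lemma algebraMap_ne_zero' {r : R} (h : r ≠ 0) : algebraMap R K r ≠ 0 := fun h0 =>
  h (IsFractionRing.injective R K (by simpa using h0))

/-- Basis of `K^(k+1)` adapted to `emb C` and a nonzero `c₀ ∈ C`. -/
noncomputable def diagBasis (C : Ideal R) (c₀ : C) (h0 : (c₀ : R) ≠ 0) :
    Module.Basis ι K (ι → K) :=
  (Pi.basisFun K ι).unitsSMul
    (Sum.elim (fun _ => 1) (fun _ => Units.mk0 _ (algebraMap_ne_zero' h0)))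

lemma diagBasis_eq (C : Ideal R) (c₀ : C) (h0 : (c₀ : R) ≠ 0) (j : ι) :
    diagBasis C c₀ h0 j = emb C (xdiag C c₀ j) := by
  funext i
  rcases j with j | j <;> rcases i with i | i <;>
    simp [diagBasis, Module.Basis.unitsSMul_apply, Pi.basisFun_apply, emb, xdiag,
      Pi.single_apply, eq_comm]

lemma exists_denom (C : Ideal R) (c₀ : C) (h0 : (c₀ : R) ≠ 0) (p : (Fin k → R) × C) :
    ∃ (s : R⁰) (r : ι → R), (s : R) • p = ∑ j, r j • xdiag C c₀ j := by
  classical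
  set b := diagBasis C c₀ h0 with hb
  set c : ι → K := fun j => b.repr (emb C p) j with hc
  obtain ⟨s, hs⟩ := IsLocalization.exist_integer_multiples R⁰ Finset.univ c
  choose r hr using fun j => hs j (Finset.mem_univ j)
  refine ⟨s, r, emb_injective C ?_⟩
  have h2 : emb C (∑ j, r j • xdiag C c₀ j) = ∑ j, algebraMap R K (r j) • b j := by
    rw [map_sum]
    refine Finset.sum_congr rfl fun j _ => ?_
    rw [map_smul, diagBasis_eq C c₀ h0 j, algebraMap_smul]
  rw [h2, map_smul]
  have h3 : ∀ j, algebraMap R K (r j) • b j = (s : R) • (c j • b j) := by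
    intro j
    rw [hr j, smul_assoc]
  rw [Finset.sum_congr rfl fun j _ => h3 j, ← Finset.smul_sum]
  congr 1
  exact (b.sum_repr (emb C p)).symm

lemma ext_emb (C : Ideal R) (c₀ : C) (h0 : (c₀ : R) ≠ 0)
    (T : (ι → K) →ₗ[K] (ι → K)) (u : ((Fin k → R) × C) →ₗ[R] (ι → K))
    (h : ∀ j, T (emb C (xdiag C c₀ j)) = u (xdiag C c₀ j)) (p : (Fin k → R) × C) :
    T (emb C p) = u p := by
  obtain ⟨s, r, hs⟩ := exists_denom C c₀ h0 p
  have key : T (emb C ((s : R) • p)) = u ((s : R) • p) := by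
    rw [hs, map_sum, map_sum, map_sum]
    refine Finset.sum_congr rfl fun j _ => ?_
    calc T (emb C (r j • xdiag C c₀ j))
        = algebraMap R K (r j) • T (emb C (xdiag C c₀ j)) := by
          rw [map_smul, ← algebraMap_smul (A := K) (M := ι → K), map_smul]
      _ = u (r j • xdiag C c₀ j) := by
          rw [h j, algebraMap_smul, ← map_smul]
  have hsK : algebraMap R K (s : R) ≠ 0 :=
    algebraMap_ne_zero' (nonZeroDivisors.coe_ne_zero s)
  have e1 : T (emb C ((s : R) • p)) = algebraMap R K (s : R) • T (emb C p) := by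
    rw [map_smul, ← algebraMap_smul (A := K) (M := ι → K), map_smul]
  have e2 : u ((s : R) • p) = algebraMap R K (s : R) • u p := by
    rw [map_smul, algebraMap_smul]
  rw [e1, e2] at key
  exact smul_right_injective _ hsK key

theorem ideal_cancel {A B : Ideal R} (hA : A ≠ 0) (hB : B ≠ 0)
    (f : ((Fin k → R) × A) ≃ₗ[R] ((Fin k → R) × B)) : Nonempty (A ≃ₗ[R] B) := by
  classical
  obtain ⟨a₀, ha₀A, ha₀⟩ := Submodule.exists_mem_ne_zero_of_ne_bot hA
  obtain ⟨b₀, hb₀B, hb₀⟩ := Submodule.exists_mem_ne_zero_of_ne_bot hB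
  set a0 : A := ⟨a₀, ha₀A⟩
  set b0 : B := ⟨b₀, hb₀B⟩
  set bA := diagBasis A a0 ha₀ with hbA
  set bB := diagBasis B b0 hb₀ with hbB
  set T : (ι → K) →ₗ[K] (ι → K) :=
    bA.constr K (fun j => emb B (f (xdiag A a0 j))) with hT
  set S : (ι → K) →ₗ[K] (ι → K) :=
    bB.constr K (fun j => emb A (f.symm (xdiag B b0 j))) with hS
  have hTemb : ∀ p, T (emb A p) = emb B (f p) := by
    refine ext_emb A a0 ha₀ T ((emb B).comp (f : ((Fin k → R) × A) →ₗ[R] _)) fun j => ?_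
    rw [← diagBasis_eq A a0 ha₀ j, ← hbA, Module.Basis.constr_basis]
    rfl
  have hSemb : ∀ q, S (emb B q) = emb A (f.symm q) := by
    refine ext_emb B b0 hb₀ S ((emb A).comp (f.symm : ((Fin k → R) × B) →ₗ[R] _)) fun j => ?_
    rw [← diagBasis_eq B b0 hb₀ j, ← hbB, Module.Basis.constr_basis]
    rfl
  have hST : S.comp T = LinearMap.id := by
    refine bA.ext fun j => ?_
    rw [LinearMap.comp_apply, diagBasis_eq A a0 ha₀ j, hTemb, hSemb, LinearEquiv.symm_apply_apply,
      LinearMap.id_apply]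
  have hTS : T.comp S = LinearMap.id := by
    refine bB.ext fun j => ?_
    rw [LinearMap.comp_apply, diagBasis_eq B b0 hb₀ j, hSemb, hTemb, LinearEquiv.apply_symm_apply,
      LinearMap.id_apply]
  set d := LinearMap.det T with hd
  set d' := LinearMap.det S with hd'
  have hdd : d' * d = 1 := by
    rw [hd, hd', ← LinearMap.det_comp, hST, LinearMap.det_id]
  -- key determinant relation
  have hrel : ∀ v : ι → ((Fin k → R) × A),
      ω (fun j => emb B (f (v j))) = d * ω (fun j => emb A (v j)) := by
    intro v
    have : (fun j => emb B (f (v j))) = T ∘ (fun j => emb A (v j)) := by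
      funext j; simp [Function.comp, hTemb]
    rw [this, Module.Basis.det_comp]
  have hrel' : ∀ w : ι → ((Fin k → R) × B),
      ω (fun j => emb A (f.symm (w j))) = d' * ω (fun j => emb B (w j)) := by
    intro w
    have : (fun j => emb A (f.symm (w j))) = S ∘ (fun j => emb B (w j)) := by
      funext j; simp [Function.comp, hSemb]
    rw [this, Module.Basis.det_comp]
  -- construct the maps
  have exB : ∀ a : A, ∃ b : B, algebraMap R K (b : R) = d * algebraMap R K (a : R) := by
    intro a
    obtain ⟨b, hbmem, hbeq⟩ := omega_mem B (fun j => f (xdiag A a j))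
    exact ⟨⟨b, hbmem⟩, by rw [← hbeq, hrel, omega_diag]⟩
  have exA : ∀ b : B, ∃ a : A, algebraMap R K (a : R) = d' * algebraMap R K (b : R) := by
    intro b
    obtain ⟨a, hamem, haeq⟩ := omega_mem A (fun j => f.symm (xdiag B b j))
    exact ⟨⟨a, hamem⟩, by rw [← haeq, hrel', omega_diag]⟩
  choose φ hφ using exB
  choose ψ hψ using exA
  have hinjK : Function.Injective (algebraMap R K) := IsFractionRing.injective R K
  have hφadd : ∀ x y : A, φ (x + y) = φ x + φ y := by
    intro x y
    apply Subtype.ext; apply hinjK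
    push_cast [hφ]
    ring
  have hφsmul : ∀ (r : R) (x : A), φ (r • x) = r • φ x := by
    intro r x
    apply Subtype.ext; apply hinjK
    simp only [hφ, Submodule.coe_smul, smul_eq_mul, map_mul]
    ring
  have hψadd : ∀ x y : B, ψ (x + y) = ψ x + ψ y := by
    intro x y
    apply Subtype.ext; apply hinjK
    push_cast [hψ]
    ring
  have hψsmul : ∀ (r : R) (x : B), ψ (r • x) = r • ψ x := by
    intro r x
    apply Subtype.ext; apply hinjK
    simp only [hψ, Submodule.coe_smul, smul_eq_mul, map_mul]
    ring
  set φL : A →ₗ[R] B := { toFun := φ, map_add' := hφadd, map_smul' := hφsmul }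
  set ψL : B →ₗ[R] A := { toFun := ψ, map_add' := hψadd, map_smul' := hψsmul }
  have hco1 : φL.comp ψL = LinearMap.id := by
    ext x
    apply hinjK
    show algebraMap R K ((φ (ψ x) : R)) = _
    rw [hφ, hψ, ← mul_assoc, mul_comm d d', hdd, one_mul]
    rfl
  have hco2 : ψL.comp φL = LinearMap.id := by
    ext x
    apply hinjK
    show algebraMap R K ((ψ (φ x) : R)) = _
    rw [hψ, hφ, ← mul_assoc, hdd, one_mul]
    rfl
  exact ⟨LinearEquiv.ofLinear φL ψL hco1 hco2⟩
end

section BaseChange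

open TensorProduct

variable (R A M₂ M₃ : Type*) [CommSemiring R] [CommSemiring A] [Algebra R A]
  [AddCommMonoid M₂] [AddCommMonoid M₃] [Module R M₂] [Module R M₃]

/-- `A`-linear version of `TensorProduct.prodRight`. -/
noncomputable def prodRightAlg :
    (A ⊗[R] (M₂ × M₃)) ≃ₗ[A] ((A ⊗[R] M₂) × (A ⊗[R] M₃)) :=
  LinearEquiv.ofLinear
    (LinearMap.prod
      (AlgebraTensorModule.map (LinearMap.id : A →ₗ[A] A) (LinearMap.fst R M₂ M₃))
      (AlgebraTensorModule.map (LinearMap.id : A →ₗ[A] A) (LinearMap.snd R M₂ M₃)))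
    (LinearMap.coprod
      (AlgebraTensorModule.map (LinearMap.id : A →ₗ[A] A) (LinearMap.inl R M₂ M₃))
      (AlgebraTensorModule.map (LinearMap.id : A →ₗ[A] A) (LinearMap.inr R M₂ M₃)))
    (by ext <;> simp)
    (by ext <;> simp)

@[simp] lemma prodRightAlg_tmul (a : A) (m : M₂ × M₃) :
    prodRightAlg R A M₂ M₃ (a ⊗ₜ m) = (a ⊗ₜ m.1, a ⊗ₜ m.2) := rfl

end BaseChange

section IdealBaseChange

open TensorProduct

variable (D D' : Type*) [CommRing D] [CommRing D'] [Algebra D D'] [Module.Flat D D']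
  (I : Ideal D)

/-- The natural map `D' ⊗ I → D'`. -/
noncomputable def idealBC : (D' ⊗[D] I) →ₗ[D'] D' :=
  (TensorProduct.AlgebraTensorModule.rid D D' D').toLinearMap ∘ₗ
    LinearMap.baseChange D' (Submodule.subtype I)

@[simp] lemma idealBC_tmul (d : D') (a : I) :
    idealBC D D' I (d ⊗ₜ a) = d * algebraMap D D' (a : D) := by
  simp [idealBC, Algebra.smul_def, mul_comm]

lemma idealBC_injective : Function.Injective (idealBC D D' I) := by
  have h1 : Function.Injective (LinearMap.baseChange D' (Submodule.subtype I)) := by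
    rw [LinearMap.baseChange_eq_ltensor]
    exact Module.Flat.lTensor_preserves_injective_linearMap _ (Submodule.injective_subtype I)
  exact (TensorProduct.AlgebraTensorModule.rid D D' D').injective.comp h1

lemma idealBC_range : LinearMap.range (idealBC D D' I) = I.map (algebraMap D D') := by
  refine le_antisymm ?_ ?_
  · rintro x ⟨t, rfl⟩
    induction t using TensorProduct.induction_on with
    | zero => simp
    | tmul d a =>
        rw [idealBC_tmul]
        exact Ideal.mul_mem_left _ _ (Ideal.mem_map_of_mem _ a.2)
    | add s t hs ht => rw [map_add]; exact Submodule.add_mem _ hs ht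
  · rw [Ideal.map]
    refine Ideal.span_le.mpr ?_
    rintro _ ⟨a, ha, rfl⟩
    exact ⟨(1 : D') ⊗ₜ ⟨a, ha⟩, by simp⟩

/-- `D' ⊗ I ≅ I·D'`. -/
noncomputable def idealBCEquiv : (D' ⊗[D] I) ≃ₗ[D'] (I.map (algebraMap D D')) :=
  (LinearEquiv.ofInjective _ (idealBC_injective D D' I)).trans
    (LinearEquiv.ofEq _ _ (idealBC_range D D' I))

end IdealBaseChange

/-- Steinitz classes are compatible with flat base change `j : D → D'` between
Dedekind domains: if `M ≅ D^k ⊕ I`, and `M ⊗_D D' ≅ D'^k ⊕ J`, then the class of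
`J` equals the class of the extended ideal `I·D'`; equivalently `J` and `I·D'`
are isomorphic as `D'`-modules. -/
theorem steinitz_class_base_change
    (D D' : Type*) [CommRing D] [IsDomain D] [IsDedekindDomain D]
    [CommRing D'] [IsDomain D'] [IsDedekindDomain D'] [Algebra D D']
    (hinj : Function.Injective (algebraMap D D')) [Module.Flat D D']
    (M : Type*) [AddCommGroup M] [Module D M]
    [Module.Finite D M] [Module.Projective D M]
    (k : ℕ) (I : Ideal D) (hI : I ≠ 0)
    (eM : M ≃ₗ[D] ((Fin k → D) × I))
    (J : Ideal D') (hJ : J ≠ 0)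
    (eM' : (TensorProduct D D' M) ≃ₗ[D'] ((Fin k → D') × J)) :
    Nonempty ((Ideal.map (algebraMap D D') I) ≃ₗ[D'] J) := by
  have hImap : I.map (algebraMap D D') ≠ 0 := by
    obtain ⟨a, haI, ha⟩ := Submodule.exists_mem_ne_zero_of_ne_bot hI
    intro h0
    have : algebraMap D D' a ∈ I.map (algebraMap D D') := Ideal.mem_map_of_mem _ haI
    rw [h0] at this
    exact ha (hinj (by simpa using this))
  have e1 : (TensorProduct D D' M) ≃ₗ[D'] (TensorProduct D D' ((Fin k → D) × I)) :=
    LinearEquiv.baseChange D D' M ((Fin k → D) × I) eM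
  have e2 : (TensorProduct D D' ((Fin k → D) × I)) ≃ₗ[D']
      ((TensorProduct D D' (Fin k → D)) × (TensorProduct D D' I)) :=
    prodRightAlg D D' (Fin k → D) I
  have e3 : (TensorProduct D D' (Fin k → D)) ≃ₗ[D'] (Fin k → D') :=
    TensorProduct.piScalarRight D D' D' (Fin k)
  have e4 : (TensorProduct D D' I) ≃ₗ[D'] (I.map (algebraMap D D')) := idealBCEquiv D D' I
  have total : ((Fin k → D') × (I.map (algebraMap D D'))) ≃ₗ[D'] ((Fin k → D') × J) :=
    (e3.prodCongr e4).symm.trans (e2.symm.trans (e1.symm.trans eM'))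
  exact ideal_cancel hImap hJ total
end

section
/- Let p ≡ 1 mod 4 be an odd prime, A = ζ_{2p}, α = ζ_{4p} with α² = A. If S⁺ is a finitely generated projective ℤ[A]-module that becomes free after tensoring with ℤ[A, 1/p], then S⁺ ⊗_{ℤ[A]} ℤ[α] is a free ℤ[α]-module. -/
open NumberField

/-- `2p` as a positive natural number. -/
def twoPPNat17 (p : ℕ) (hp : p.Prime) : ℕ+ := ⟨2 * p, by have := hp.pos; omega⟩

/-- `4p` as a positive natural number. -/
def fourPPNat17 (p : ℕ) (hp : p.Prime) : ℕ+ := ⟨4 * p, by have := hp.pos; omega⟩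


universe uu in
lemma free_of_sandwich {R : Type*} [CommRing R] [IsDomain R] {x : R} (hx : x ≠ 0)
    (hprin : ∀ I : Ideal R, x ∈ I → I.IsPrincipal) (n : ℕ) :
    ∀ (ι : Type uu) [Fintype ι], Fintype.card ι = n → ∀ (M : Submodule R (ι → R)),
      (∀ v : ι → R, x • v ∈ M) → Module.Free R M := by
  induction n with
  | zero =>
    intro ι _ hcard M hM
    have he : IsEmpty ι := Fintype.card_eq_zero_iff.mp hcard
    have : Subsingleton (ι → R) := ⟨fun a b => funext fun i => (he.false i).elim⟩
    have : Subsingleton M := ⟨fun a b => Subtype.ext (Subsingleton.elim _ _)⟩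
    infer_instance
  | succ n ih =>
    intro ι _ hcard M hM
    classical
    obtain ⟨i₀⟩ : Nonempty ι := Fintype.card_pos_iff.mp (by omega)
    -- the coordinate map
    set f : M →ₗ[R] R := (LinearMap.proj i₀).comp M.subtype with hf
    have hxI : x ∈ LinearMap.range f := by
      refine ⟨⟨x • (Pi.single i₀ 1 : ι → R), hM _⟩, ?_⟩
      show (x • (Pi.single i₀ 1 : ι → R)) i₀ = x
      simp
    obtain ⟨a, ha⟩ := (hprin _ hxI).principal
    have hane : a ≠ 0 := by
      rintro rfl
      rw [ha] at hxI
      simp only [Submodule.span_zero_singleton, Submodule.mem_bot] at hxI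
      exact hx hxI
    -- R ≃ₗ span {a} = range f
    have hmul : Function.Injective (LinearMap.toSpanSingleton R R a) := by
      intro r s hrs
      simp only [LinearMap.toSpanSingleton_apply, smul_eq_mul] at hrs
      exact mul_right_cancel₀ hane hrs
    let e : R ≃ₗ[R] LinearMap.range (LinearMap.toSpanSingleton R R a) :=
      LinearEquiv.ofInjective _ hmul
    have ha' : LinearMap.range f = LinearMap.range (LinearMap.toSpanSingleton R R a) := by
      rw [ha, LinearMap.span_singleton_eq_range]
    let h : M →ₗ[R] R :=
      (e.symm.toLinearMap.comp ((LinearEquiv.ofEq _ _ ha').toLinearMap.comp f.rangeRestrict))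
    have hsurj : Function.Surjective h := by
      simp only [h, LinearMap.coe_comp, LinearEquiv.coe_toLinearMap]
      exact e.symm.surjective.comp ((LinearEquiv.ofEq _ _ ha').surjective.comp
        f.surjective_rangeRestrict)
    have hker : ∀ m : M, h m = 0 ↔ f m = 0 := by
      intro m
      simp only [h, LinearMap.comp_apply, LinearEquiv.coe_toLinearMap]
      rw [LinearEquiv.map_eq_zero_iff, LinearEquiv.map_eq_zero_iff]
      constructor
      · intro hz
        have := congrArg Subtype.val hz
        simpa using this
      · intro hz
        exact Subtype.ext (by simpa using hz)
    -- split the surjection h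
    obtain ⟨sec, hsec⟩ := Module.projective_lifting_property h LinearMap.id hsurj
    have hsec' : ∀ r : R, h (sec r) = r := fun r => by
      simpa using LinearMap.congr_fun hsec r
    -- M ≃ ker h × R
    let pr : M →ₗ[R] LinearMap.ker h :=
      LinearMap.codRestrict _ (LinearMap.id - sec.comp h) (by
        intro m
        simp only [LinearMap.mem_ker, LinearMap.sub_apply, LinearMap.id_apply, map_sub,
          LinearMap.comp_apply]
        rw [hsec' (h m), sub_self])
    have hpr : ∀ (m : M), ((pr m : M) : ι → R) = (m : ι → R) - ((sec (h m) : M) : ι → R) := by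
      intro m; rfl
    let Φ : M ≃ₗ[R] (LinearMap.ker h × R) := by
      refine LinearEquiv.ofLinear (LinearMap.prod pr h)
        (LinearMap.coprod (LinearMap.ker h).subtype sec) ?_ ?_
      · apply LinearMap.ext
        rintro ⟨⟨k, hk⟩, r⟩
        have hk' : h k = 0 := hk
        simp only [LinearMap.comp_apply, LinearMap.coprod_apply, Submodule.coe_subtype,
          LinearMap.prod_apply, LinearMap.id_apply, Function.prod]
        refine Prod.ext (Subtype.ext (Subtype.ext ?_)) ?_
        · have : h (↑(⟨k, hk⟩ : LinearMap.ker h) + sec r) = r := by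
            simp [map_add, hk', hsec' r]
          rw [hpr, this]
          push_cast
          abel
        · simp [map_add, hk', hsec' r]
      · apply LinearMap.ext
        intro m
        simp only [LinearMap.comp_apply, LinearMap.prod_apply, LinearMap.coprod_apply,
          Submodule.coe_subtype, LinearMap.id_apply, Function.prod]
        apply Subtype.ext
        rw [Submodule.coe_add, hpr]
        abel
    -- ker h is free by induction
    have hkerfree : Module.Free R (LinearMap.ker h) := by
      -- embed ker h into functions on ι \ {i₀}
      let ε : LinearMap.ker h →ₗ[R] ({ j : ι // j ≠ i₀ } → R) :=
        { toFun := fun m j => (m : ι → R) j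
          map_add' := by intros; rfl
          map_smul' := by intros; rfl }
      have hεinj : Function.Injective ε := by
        intro m m' hmm
        ext j
        by_cases hj : j = i₀
        · subst hj
          have h1 : f m.1 = 0 := (hker _).mp m.2
          have h2 : f m'.1 = 0 := (hker _).mp m'.2
          simp only [hf, LinearMap.comp_apply, LinearMap.proj_apply,
            Submodule.coe_subtype] at h1 h2
          rw [h1, h2]
        · exact congrFun hmm ⟨j, hj⟩
      have hcard' : Fintype.card { j : ι // j ≠ i₀ } = n := by
        rw [Fintype.card_subtype_compl (p := fun j => j = i₀)] at *
        · simp only [Fintype.card_subtype_eq] at *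
          omega
      have hM' : ∀ w : { j : ι // j ≠ i₀ } → R, x • w ∈ LinearMap.range ε := by
        intro w
        classical
        set v : ι → R := fun j => if hj : j = i₀ then 0 else w ⟨j, hj⟩ with hv
        have hxv : x • v ∈ M := hM v
        have hfv : f ⟨x • v, hxv⟩ = 0 := by
          simp [hf, hv]
        refine ⟨⟨⟨x • v, hxv⟩, (hker _).mpr hfv⟩, ?_⟩
        ext j
        simp [ε, hv, dif_neg j.2]
      have := ih { j : ι // j ≠ i₀ } hcard' (LinearMap.range ε) hM'
      exact Module.Free.of_equiv (LinearEquiv.ofInjective ε hεinj).symm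
    exact Module.Free.of_equiv Φ.symm


/-- `p` as a positive natural number. -/
def pPNat17aux (p : ℕ) (hp : p.Prime) : ℕ+ := ⟨p, hp.pos⟩

lemma cyclo_p_of_two_p (p : ℕ) (hp : p.Prime) (hodd : Odd p) {K : Type*} [Field K] [Algebra ℚ K]
    [IsCyclotomicExtension {((twoPPNat17 p hp : ℕ+) : ℕ)} ℚ K] :
    IsCyclotomicExtension {((pPNat17aux p hp : ℕ+) : ℕ)} ℚ K := by
  set n : ℕ+ := twoPPNat17 p hp
  have hζ := IsCyclotomicExtension.zeta_spec n ℚ K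
  set ζ := IsCyclotomicExtension.zeta n ℚ K
  have h2p : (n : ℕ) = 2 * p := rfl
  have hη : IsPrimitiveRoot (ζ ^ 2) p := hζ.pow (by simp [h2p, hp.pos]) h2p
  have hzp2 : (ζ ^ p) ^ 2 = 1 := by
    rw [← pow_mul, mul_comm, ← h2p]
    exact hζ.pow_eq_one
  have hzp1 : ζ ^ p ≠ 1 := by
    intro h
    have hle := Nat.le_of_dvd hp.pos (hζ.dvd_of_pow_eq_one p h)
    rw [h2p] at hle
    have := hp.pos
    omega
  have hzneg : ζ ^ p = -1 := by
    have hfac : (ζ ^ p - 1) * (ζ ^ p + 1) = 0 := by linear_combination hzp2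
    rcases mul_eq_zero.mp hfac with h | h
    · exact absurd (sub_eq_zero.mp h) hzp1
    · exact eq_neg_of_add_eq_zero_left h
  have hmem : ζ ∈ Algebra.adjoin ℚ ({ζ ^ 2} : Set K) := by
    have hexp : 2 * ((p + 1) / 2) = p + 1 := by
      obtain ⟨k, hk⟩ := hodd; omega
    have hzz : ζ = -(ζ ^ 2) ^ ((p + 1) / 2) := by
      rw [← pow_mul, hexp, pow_succ, hzneg]
      ring
    have h1 : ζ ^ 2 ∈ Algebra.adjoin ℚ ({ζ ^ 2} : Set K) :=
      Algebra.self_mem_adjoin_singleton ℚ _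
    have h2 : (ζ ^ 2) ^ ((p + 1) / 2) ∈ Algebra.adjoin ℚ ({ζ ^ 2} : Set K) :=
      Subalgebra.pow_mem _ h1 _
    have h3 : -(ζ ^ 2) ^ ((p + 1) / 2) ∈ Algebra.adjoin ℚ ({ζ ^ 2} : Set K) :=
      Subalgebra.neg_mem _ h2
    rwa [← hzz] at h3
  have hadj : Algebra.adjoin ℚ ({ζ ^ 2} : Set K) = ⊤ := by
    rw [eq_top_iff, ← IsCyclotomicExtension.adjoin_primitive_root_eq_top hζ]
    exact Algebra.adjoin_le (Set.singleton_subset_iff.mpr hmem)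
  haveI := hη.adjoin_isCyclotomicExtension ℚ (n := ((pPNat17aux p hp : ℕ+) : ℕ))
  exact IsCyclotomicExtension.equiv _ ℚ _
    ((Subalgebra.equivOfEq _ _ hadj).trans Subalgebra.topEquiv)

set_option synthInstance.maxHeartbeats 1000000 in
lemma ideal_principal_of_pow_p_mem (p : ℕ) (hp : p.Prime) (hodd : Odd p)
    {K : Type*} [Field K] [NumberField K] [ha : Algebra ℚ K]
    [IsCyclotomicExtension {((pPNat17aux p hp : ℕ+) : ℕ)} ℚ K]
    (s : ℕ) (I : Ideal (𝓞 K)) (hmem : (p : 𝓞 K) ^ s ∈ I) : I.IsPrincipal := by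
  obtain rfl : ha = DivisionRing.toRatAlgebra := Subsingleton.elim _ _
  haveI : Fact (Nat.Prime p) := ⟨hp⟩
  haveI : Fact (Nat.Prime ((pPNat17aux p hp) : ℕ)) := ⟨hp⟩
  have hζ := IsCyclotomicExtension.zeta_spec (pPNat17aux p hp) ℚ K
  set π : 𝓞 K := hζ.toInteger - 1 with hπdef
  have hπ : Prime π := IsPrimitiveRoot.zeta_sub_one_prime' (p := ((pPNat17aux p hp : ℕ+) : ℕ)) hζ
  have hp2 : pPNat17aux p hp ≠ 2 := by
    intro h
    have h2 : ((pPNat17aux p hp : ℕ+) : ℕ) = ((2 : ℕ+) : ℕ) := congrArg _ h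
    obtain ⟨k, hk⟩ := hodd
    simp [pPNat17aux] at h2
    omega
  have hdvd : π ^ (p - 1) ∣ (p : 𝓞 K) := by
    obtain ⟨n', hn'⟩ : ∃ n', p = n' + 1 := ⟨p - 1, by have := hp.two_le; omega⟩
    have hη' : IsPrimitiveRoot hζ.toInteger (n' + 1) := by
      have h0 := hζ.toInteger_isPrimitiveRoot
      have key : ∀ m : ℕ, m = n' + 1 → IsPrimitiveRoot hζ.toInteger m →
          IsPrimitiveRoot hζ.toInteger (n' + 1) := by
        rintro m rfl hm; exact hm
      exact key _ (by show p = n' + 1; exact hn') h0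
    have hprod := hη'.prod_pow_sub_one_eq_order
    have hdd : π ^ n' ∣ ∏ k ∈ Finset.range n', (hζ.toInteger ^ (k + 1) - 1) := by
      have h1 : (∏ _k ∈ Finset.range n', π) ∣
          ∏ k ∈ Finset.range n', (hζ.toInteger ^ (k + 1) - 1) :=
        Finset.prod_dvd_prod_of_dvd _ _ (fun k _ => sub_one_dvd_pow_sub_one hζ.toInteger (k + 1))
      rwa [Finset.prod_const, Finset.card_range] at h1
    have hmain : π ^ n' ∣ (p : 𝓞 K) := by
      refine dvd_trans hdd ⟨(-1) ^ n', ?_⟩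
      rw [show ((p : 𝓞 K)) = ((n' : ℕ) : 𝓞 K) + 1 from by rw [hn']; push_cast; ring, ← hprod]
      ring
    rw [show p - 1 = n' from by omega]
    exact hmain
  have hnormπ : Ideal.absNorm (Ideal.span {π}) = p := by
    rw [Ideal.absNorm_span_singleton, hζ.norm_toInteger_sub_one_of_prime_ne_two' (fun h => hp2 (PNat.eq h))]
    simp [pPNat17aux]
  have hrank : Module.finrank ℤ (𝓞 K) = p - 1 := by
    rw [RingOfIntegers.rank, IsCyclotomicExtension.finrank (n := ((pPNat17aux p hp : ℕ+) : ℕ)) K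
      (Polynomial.cyclotomic.irreducible_rat hp.pos), show ((pPNat17aux p hp : ℕ+) : ℕ) = p from rfl,
      Nat.totient_prime hp]
  have hnormp : Ideal.absNorm (Ideal.span {(p : 𝓞 K)}) = p ^ (p - 1) := by
    have hcast : (p : 𝓞 K) = algebraMap ℤ (𝓞 K) (p : ℤ) := by simp
    rw [Ideal.absNorm_span_singleton, hcast,
      Algebra.norm_algebraMap_of_basis (RingOfIntegers.basis K),
      ← Module.finrank_eq_card_chooseBasisIndex, hrank]
    rw [Int.natAbs_pow]
    simp
  have hspan : Ideal.span {(p : 𝓞 K)} = Ideal.span {π} ^ (p - 1) := by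
    have hle : Ideal.span {(p : 𝓞 K)} ≤ Ideal.span {π} ^ (p - 1) := by
      rw [Ideal.span_singleton_pow]
      exact Ideal.span_singleton_le_span_singleton.mpr hdvd
    obtain ⟨C, hC⟩ := Ideal.dvd_iff_le.mpr hle
    have hnC := congrArg Ideal.absNorm hC
    have h2 : Ideal.absNorm (Ideal.span {π} ^ (p - 1) * C) =
        Ideal.absNorm (Ideal.span {π}) ^ (p - 1) * Ideal.absNorm C := by
      rw [map_mul, map_pow]
    rw [h2, hnormπ, hnormp] at hnC
    have hpow : 0 < (p : ℕ) ^ (p - 1) := pow_pos hp.pos _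
    have hCone : Ideal.absNorm C = 1 := by
      have heq : (p : ℕ) ^ (p - 1) * Ideal.absNorm C = p ^ (p - 1) * 1 := by
        rw [mul_one, ← hnC]
      exact Nat.eq_of_mul_eq_mul_left hpow heq
    rw [Ideal.absNorm_eq_one_iff] at hCone
    rw [hC, hCone, Ideal.mul_top]
  have hIdvd : I ∣ Ideal.span {π} ^ ((p - 1) * s) := by
    rw [Ideal.dvd_iff_le, pow_mul, ← hspan, Ideal.span_singleton_pow]
    exact (Ideal.span_singleton_le_iff_mem _).mpr hmem
  have hbot : Ideal.span {π} ≠ (⊥ : Ideal (𝓞 K)) := by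
    simp [Ideal.span_singleton_eq_bot, hπ.ne_zero]
  have hPr : Prime (Ideal.span {π}) :=
    (Ideal.prime_iff_isPrime hbot).mpr ((Ideal.span_singleton_prime hπ.ne_zero).mpr hπ)
  obtain ⟨i, _, hassoc⟩ := (dvd_prime_pow hPr _).mp hIdvd
  exact ⟨⟨π ^ i, by rw [associated_iff_eq.mp hassoc, Ideal.span_singleton_pow]⟩⟩


lemma exists_uniform_denominator {R : Type*} [CommRing R] (x : R) {α : Type*} [Fintype α]
    (z : α → Localization.Away x) :
    ∃ c : ℕ, ∀ a2 : α, ∃ r : R, (x ^ c) • z a2 = algebraMap R (Localization.Away x) r := by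
  classical
  have step : ∀ a2 : α, ∃ c : ℕ, ∃ r : R,
      (x ^ c) • z a2 = algebraMap R (Localization.Away x) r := by
    intro a2
    obtain ⟨⟨r, d⟩, hrd⟩ := IsLocalization.surj (Submonoid.powers x) (z a2)
    obtain ⟨c, hc⟩ := d.2
    have hc' : x ^ c = (d : R) := hc
    refine ⟨c, r, ?_⟩
    rw [Algebra.smul_def, hc', mul_comm]
    exact hrd
  choose cf rf hfr using step
  refine ⟨Finset.univ.sup cf, fun a2 => ⟨x ^ (Finset.univ.sup cf - cf a2) * rf a2, ?_⟩⟩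
  have hle : cf a2 ≤ Finset.univ.sup cf := Finset.le_sup (Finset.mem_univ a2)
  have hxp : x ^ (Finset.univ.sup cf) = x ^ (Finset.univ.sup cf - cf a2) * x ^ (cf a2) := by
    rw [← pow_add]
    congr 1
    omega
  rw [hxp, mul_smul, hfr a2, map_mul, Algebra.smul_def]

lemma free_of_localization_sandwich
    {R : Type*} [CommRing R] [IsDomain R] {x : R} (hx : x ≠ 0)
    (hprin : ∀ (s : ℕ) (I : Ideal R), x ^ s ∈ I → I.IsPrincipal)
    (S : Type*) [AddCommGroup S] [Module R S] [Module.Finite R S] [Module.Projective R S]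
    (hfree : Module.Free (Localization.Away x) (TensorProduct R (Localization.Away x) S)) :
    Module.Free R S := by
  classical
  set Rp := Localization.Away x with hRp
  letI : Module.Free Rp (TensorProduct R Rp S) := hfree
  have hxmem : Submonoid.powers x ≤ nonZeroDivisors R :=
    powers_le_nonZeroDivisors_of_noZeroDivisors hx
  have galg : Function.Injective (algebraMap R Rp) := IsLocalization.injective Rp hxmem
  haveI : Module.Flat R S := Module.Flat.of_projective
  set g : R →ₗ[R] Rp := Algebra.linearMap R Rp with hg
  have hrt : Function.Injective (LinearMap.rTensor S g) :=
    Module.Flat.rTensor_preserves_injective_linearMap g galg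
  set j : S →ₗ[R] TensorProduct R Rp S := (TensorProduct.mk R Rp S) 1 with hj
  have hjeq : ∀ m : S, j m = (LinearMap.rTensor S g) ((TensorProduct.lid R S).symm m) := by
    intro m
    simp [hj, hg]
  have hjinj : Function.Injective j := by
    intro a b hab
    rw [hjeq, hjeq] at hab
    exact (TensorProduct.lid R S).symm.injective (hrt hab)
  haveI : Module.Finite Rp (TensorProduct R Rp S) := Module.Finite.base_change R Rp S
  set ι := Module.Free.ChooseBasisIndex Rp (TensorProduct R Rp S) with hι
  set b : Module.Basis ι Rp (TensorProduct R Rp S) := Module.Free.chooseBasis Rp _ with hb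
  set φ : TensorProduct R Rp S ≃ₗ[Rp] (ι → Rp) := b.equivFun with hφ
  set χ : S →ₗ[R] (ι → Rp) := ((φ.restrictScalars R).toLinearMap).comp j with hχ
  have hχinj : Function.Injective χ := by
    intro a b hab
    exact hjinj ((φ.restrictScalars R).injective hab)
  obtain ⟨m, gens, hgens⟩ := Module.Finite.exists_fin (R := R) (M := S)
  -- denominators of generator coordinates
  obtain ⟨ca, hca⟩ := exists_uniform_denominator x (fun q : Fin m × ι => χ (gens q.1) q.2)
  -- basis vectors are Rp-combinations of images of generators
  have hsp : (⊤ : Submodule Rp (TensorProduct R Rp S)) ≤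
      Submodule.span Rp (Set.range fun l => j (gens l)) := by
    intro z _
    have hz : z ∈ Submodule.span R {t : TensorProduct R Rp S | ∃ w s0, w ⊗ₜ[R] s0 = t} := by
      rw [TensorProduct.span_tmul_eq_top R Rp S]
      trivial
    have key : ∀ t ∈ {t : TensorProduct R Rp S | ∃ w s0, w ⊗ₜ[R] s0 = t},
        t ∈ (Submodule.span Rp (Set.range fun l => j (gens l))).restrictScalars R := by
      rintro t ⟨w, s0, rfl⟩
      have h1 : j s0 ∈ Submodule.span Rp (Set.range fun l => j (gens l)) := by
        have hs0 : s0 ∈ Submodule.span R (Set.range gens) := by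
          rw [hgens]; trivial
        have h2 : j s0 ∈ Submodule.map j (Submodule.span R (Set.range gens)) :=
          ⟨s0, hs0, rfl⟩
        rw [Submodule.map_span] at h2
        have hsub : Submodule.span R (⇑j '' Set.range gens) ≤
            (Submodule.span Rp (Set.range fun l => j (gens l))).restrictScalars R := by
          apply Submodule.span_le.mpr
          rintro t2 ⟨s3, ⟨l, rfl⟩, rfl⟩
          exact Submodule.subset_span ⟨l, rfl⟩
        exact hsub h2
      have hwt : w ⊗ₜ[R] s0 = w • j s0 := by
        simp [hj, TensorProduct.smul_tmul']
      rw [hwt]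
      exact Submodule.smul_mem _ w h1
    exact Submodule.span_le.mpr key hz
  have hspan1 : ∀ i : ι, ∃ c2 : Fin m → Rp,
      (∑ l, c2 l • χ (gens l)) = Pi.single i (1 : Rp) := by
    intro i
    have hmem : φ.symm (Pi.single i 1) ∈
        Submodule.span Rp (Set.range fun l => j (gens l)) := hsp trivial
    rw [Submodule.mem_span_range_iff_exists_fun] at hmem
    obtain ⟨c2, hc2⟩ := hmem
    refine ⟨c2, ?_⟩
    have := congrArg φ hc2
    rw [map_sum] at this
    simp only [map_smul] at this
    rw [LinearEquiv.apply_symm_apply] at this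
    convert this using 2
    rfl
  choose cfun hcfun using hspan1
  obtain ⟨cb, hcb⟩ := exists_uniform_denominator x (fun q : ι × Fin m => cfun q.1 q.2)
  choose rcb hrcb using hcb
  -- the scaled coordinate map
  set χ' : S →ₗ[R] (ι → Rp) := (x ^ ca) • χ with hχ'
  have hmemp : x ^ ca ∈ Submonoid.powers x := ⟨ca, rfl⟩
  have hu : IsUnit (algebraMap R Rp (x ^ ca)) :=
    IsLocalization.map_units (M := Submonoid.powers x) Rp ⟨x ^ ca, hmemp⟩
  have hχ'inj : Function.Injective χ' := by
    intro a b hab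
    apply hχinj
    funext i
    have h6 : (χ' a) i = (χ' b) i := congrFun hab i
    simp only [hχ', LinearMap.smul_apply, Pi.smul_apply, Algebra.smul_def] at h6
    exact hu.mul_left_cancel h6
  set ℓ : (ι → R) →ₗ[R] (ι → Rp) :=
    LinearMap.pi (fun i => (Algebra.linearMap R Rp).comp (LinearMap.proj i)) with hℓ
  have hℓapply : ∀ (v : ι → R) (i : ι), ℓ v i = algebraMap R Rp (v i) := by
    intro v i
    simp [hℓ]
  have hℓinj : Function.Injective ℓ := by
    intro a b hab
    funext i
    exact galg (by rw [← hℓapply, ← hℓapply, hab])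
  have hrangesub : LinearMap.range χ' ≤ LinearMap.range ℓ := by
    have htop : (⊤ : Submodule R S) ≤ Submodule.comap χ' (LinearMap.range ℓ) := by
      rw [← hgens]
      apply Submodule.span_le.mpr
      rintro _ ⟨l, rfl⟩
      refine ⟨fun i => Classical.choose (hca (l, i)), ?_⟩
      funext i
      have h5 := Classical.choose_spec (hca (l, i))
      rw [hℓapply, ← h5]
      simp [hχ']
    rintro _ ⟨s0, rfl⟩
    exact htop Submodule.mem_top
  set M' : Submodule R (ι → R) := Submodule.comap ℓ (LinearMap.range χ') with hM'
  have tower : ∀ (k1 k2 : ℕ) (c : Rp) (w : ι → Rp),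
      (x ^ (k1 + k2)) • (c • w) = ((x ^ k2) • c) • ((x ^ k1) • w) := by
    intro k1 k2 c w
    rw [← algebraMap_smul Rp (x ^ (k1 + k2)) (c • w), ← algebraMap_smul Rp (x ^ k1) w,
      smul_smul, smul_smul]
    congr 1
    rw [Algebra.smul_def, pow_add, map_mul]
    ring
  have hℓsingle : ∀ i : ι, ℓ (Pi.single i (1 : R)) = Pi.single i (1 : Rp) := by
    intro i
    funext i'
    rw [hℓapply]
    rcases eq_or_ne i' i with rfl | hne
    · simp
    · simp [Pi.single_apply, hne]
  have hsingle : ∀ i : ι, (x ^ (ca + cb)) • (Pi.single i (1 : R) : ι → R) ∈ M' := by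
    intro i
    rw [hM', Submodule.mem_comap, map_smul, hℓsingle]
    have hkey : (x ^ (ca + cb)) • (Pi.single i (1 : Rp) : ι → Rp)
        = χ' (∑ l, rcb (i, l) • gens l) := by
      rw [← hcfun i, Finset.smul_sum, map_sum]
      refine Finset.sum_congr rfl fun l _ => ?_
      rw [tower ca cb (cfun i l) (χ (gens l))]
      have h7 : (x ^ cb) • cfun i l = algebraMap R Rp (rcb (i, l)) := hrcb (i, l)
      rw [h7, algebraMap_smul, map_smul]
      congr 1
    rw [hkey]
    exact ⟨_, rfl⟩
  have hMsand : ∀ v : ι → R, (x ^ (ca + cb)) • v ∈ M' := by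
    intro v
    have hv : v = ∑ i, Pi.single i (v i) := (Finset.univ_sum_single v).symm
    rw [hv, Finset.smul_sum]
    apply Submodule.sum_mem
    intro i _
    have hsw : (x ^ (ca + cb)) • (Pi.single i (v i) : ι → R)
        = v i • ((x ^ (ca + cb)) • (Pi.single i (1 : R) : ι → R)) := by
      rw [smul_comm]
      congr 1
      funext i'
      rcases eq_or_ne i' i with rfl | hne
      · simp
      · simp [Pi.single_apply, hne]
    rw [hsw]
    exact Submodule.smul_mem _ _ (hsingle i)
  haveI hfreeM' : Module.Free R M' :=
    free_of_sandwich (pow_ne_zero _ hx) (fun I hI => hprin (ca + cb) I hI)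
      (Fintype.card ι) ι rfl M' hMsand
  have he : Submodule.map ℓ M' = LinearMap.range χ' := by
    rw [hM', Submodule.map_comap_eq, inf_eq_right.mpr hrangesub]
  exact Module.Free.of_equiv (((LinearEquiv.ofInjective χ' hχ'inj).trans
    ((Submodule.equivMapOfInjective ℓ hℓinj M').trans (LinearEquiv.ofEq _ _ he)).symm)).symm

/-- Let `p ≡ 1 mod 4` be an odd prime, `K = ℚ(ζ_{2p})` and `L = ℚ(ζ_{4p})` with
`K ⊆ L` (so `ℤ[A] = 𝓞 K` and `ℤ[α] = 𝓞 L`, `α² = A`).  If `S⁺` is a finitely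
generated projective `ℤ[A]`-module which becomes free over the localization
`ℤ[A, 1/p]`, then `S⁺ ⊗_{ℤ[A]} ℤ[α]` is a free `ℤ[α]`-module. -/
theorem base_change_to_fourP_free
    (p : ℕ) (hp : p.Prime) (hodd : Odd p) (hmod : p % 4 = 1)
    (K L : Type*) [Field K] [Field L] [NumberField K] [NumberField L]
    [Algebra ℚ K] [Algebra ℚ L] [Algebra K L] [IsScalarTower ℚ K L]
    [IsCyclotomicExtension {((twoPPNat17 p hp : ℕ+) : ℕ)} ℚ K]
    [IsCyclotomicExtension {((fourPPNat17 p hp : ℕ+) : ℕ)} ℚ L]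
    (Splus : Type*) [AddCommGroup Splus] [Module (𝓞 K) Splus]
    [Module.Finite (𝓞 K) Splus] [Module.Projective (𝓞 K) Splus]
    (hfree : Module.Free (Localization.Away ((p : 𝓞 K)))
      (TensorProduct (𝓞 K) (Localization.Away ((p : 𝓞 K))) Splus)) :
    Module.Free (𝓞 L) (TensorProduct (𝓞 K) (𝓞 L) Splus) := by
  haveI := cyclo_p_of_two_p p hp hodd (K := K)
  haveI hK : Module.Free (𝓞 K) Splus := by
    have hpne : (p : 𝓞 K) ≠ 0 := by
      intro h0
      have h1 : ((p : ℕ) : K) = 0 := by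
        have h2 : (algebraMap (𝓞 K) K) (p : 𝓞 K) = ((p : ℕ) : K) := by
          push_cast
          rfl
        rw [← h2, h0, map_zero]
      exact Nat.cast_ne_zero.mpr hp.pos.ne' h1
    exact free_of_localization_sandwich hpne
      (fun s I hI => ideal_principal_of_pow_p_mem p hp hodd s I hI) Splus hfree
  exact Module.Free.tensor
end

section
/- Let D be a Dedekind domain with fraction field F, M a finitely generated projective D-module, and f : M → M a D-linear map with N ≥ 1 and d = r^s a power of a prime r in ℤ. Then Trace((f ⊗ id_F)^d) - (Trace(f ⊗ id_F))^d ∈ rD̄ ∩ F for D̄ the integral closure of D in an algebraic closure of F; in particular, if D is a ring of algebraic integers, Trace(f^d) ≡ (Trace f)^d modulo rD. -/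
open Polynomial Matrix

noncomputable section

section MatrixLemmas

variable {n : Type*} [DecidableEq n] [Fintype n]

/-- CommRing version of `matPolyEquiv_eq_X_pow_sub_C`. -/
theorem matPolyEquiv_eq_X_pow_sub_C' {K : Type*} (k : ℕ) [CommRing K] (M : Matrix n n K) :
    matPolyEquiv ((expand K k : K[X] →+* K[X]).mapMatrix (charmatrix (M ^ k))) =
      X ^ k - C (M ^ k) := by
  ext m i j
  rw [coeff_sub, coeff_C, matPolyEquiv_coeff_apply, RingHom.mapMatrix_apply, Matrix.map_apply,
    AlgHom.coe_toRingHom, Matrix.sub_apply, coeff_X_pow]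
  by_cases hij : i = j
  · rw [hij, charmatrix_apply_eq, map_sub, expand_C, expand_X, coeff_sub, coeff_X_pow, coeff_C]
    split_ifs with mp m0 <;> simp only [Matrix.one_apply_eq, Matrix.zero_apply]
  · rw [charmatrix_apply_ne _ _ _ hij, map_neg, expand_C, coeff_neg, coeff_C]
    split_ifs with m0 mp <;>
      simp only [hij, zero_sub, Matrix.zero_apply, sub_zero, neg_zero, Matrix.one_apply_ne, Ne,
        not_false_iff]

theorem charpoly_pow_charP {R : Type*} [CommRing R] {p : ℕ} [Fact p.Prime] [CharP R p]
    [Nonempty n] (A : Matrix n n R) :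
    expand R p ((A ^ p).charpoly) = A.charpoly ^ p := by
  unfold Matrix.charpoly
  rw [AlgHom.map_det, ← coe_detMonoidHom,
    ← (detMonoidHom : Matrix n n R[X] →* R[X]).map_pow]
  congr 1
  apply matPolyEquiv.injective
  rw [map_pow, matPolyEquiv_charmatrix,
    sub_pow_char_of_commute p ((C A).commute_X), ← C_pow]
  exact matPolyEquiv_eq_X_pow_sub_C' p A

theorem trace_pow_charP {R : Type*} [CommRing R] {p : ℕ} [Fact p.Prime] [CharP R p]
    (A : Matrix n n R) : (A ^ p).trace = A.trace ^ p := by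
  cases isEmpty_or_nonempty n
  · simp [Matrix.trace, zero_pow (Fact.out : p.Prime).ne_zero]
  haveI : ExpChar R p := ExpChar.prime (Fact.out : p.Prime)
  have key := charpoly_pow_charP (n := n) (p := p) A
  have hcoeff := congrArg (fun q : R[X] => q.coeff (p * (Fintype.card n - 1))) key
  rw [coeff_expand (Fact.out : p.Prime).pos, if_pos (dvd_mul_right _ _),
    Nat.mul_div_cancel_left _ (Fact.out : p.Prime).pos, ← map_frobenius_expand, coeff_map,
    coeff_expand (Fact.out : p.Prime).pos, if_pos (dvd_mul_right _ _),
    Nat.mul_div_cancel_left _ (Fact.out : p.Prime).pos, frobenius_def] at hcoeff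
  rw [Matrix.trace_eq_neg_charpoly_coeff, Matrix.trace_eq_neg_charpoly_coeff, hcoeff,
    neg_pow, neg_one_pow_char, neg_one_mul]

theorem trace_pow_of_natCast_eq_zero {S : Type*} [CommRing S] {r : ℕ} (hr : r.Prime)
    (h : (r : S) = 0) (A : Matrix n n S) : (A ^ r).trace = A.trace ^ r := by
  rcases subsingleton_or_nontrivial S with hS | hS
  · exact Subsingleton.elim _ _
  haveI : CharP S (ringChar S) := ringChar.charP S
  have hdvd : ringChar S ∣ r := (CharP.cast_eq_zero_iff S (ringChar S) r).mp h
  have h1 : ringChar S ≠ 1 := fun e => (one_ne_zero : (1 : S) ≠ 0) (by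
    simpa [e] using CharP.cast_eq_zero S (ringChar S))
  have hcr : ringChar S = r := (hr.eq_one_or_self_of_dvd _ hdvd).resolve_left h1
  haveI : Fact r.Prime := ⟨hr⟩
  haveI : CharP S r := hcr ▸ ringChar.charP S
  exact trace_pow_charP A

theorem trace_pow_pow_of_natCast_eq_zero {S : Type*} [CommRing S] {r : ℕ} (hr : r.Prime)
    (h : (r : S) = 0) (A : Matrix n n S) (s : ℕ) :
    (A ^ r ^ s).trace = A.trace ^ r ^ s := by
  induction s with
  | zero => simp
  | succ s ih =>
    rw [pow_succ, pow_mul, trace_pow_of_natCast_eq_zero hr h, ih, ← pow_mul, ← pow_succ]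

/-- The prime-power trace congruence, for square matrices over a commutative ring. -/
theorem matrix_trace_pow_prime_pow_sub_dvd {S : Type*} [CommRing S] {r : ℕ} (hr : r.Prime)
    (A : Matrix n n S) (s : ℕ) :
    (r : S) ∣ (A ^ r ^ s).trace - A.trace ^ r ^ s := by
  let I : Ideal S := Ideal.span {(r : S)}
  let φ : S →+* S ⧸ I := Ideal.Quotient.mk I
  have hr0 : ((r : ℕ) : S ⧸ I) = 0 := by
    rw [← map_natCast φ]
    exact Ideal.Quotient.eq_zero_iff_mem.2 (Ideal.subset_span rfl)
  have tmap : ∀ B : Matrix n n S, (B.map φ).trace = φ B.trace := by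
    intro B; simp [Matrix.trace, Matrix.diag, map_sum]
  have hpowmap : (A.map φ) ^ r ^ s = (A ^ r ^ s).map φ := by
    rw [← RingHom.mapMatrix_apply, ← RingHom.mapMatrix_apply, map_pow]
  have : φ ((A ^ r ^ s).trace - A.trace ^ r ^ s) = 0 := by
    rw [map_sub, map_pow, ← tmap, ← tmap, ← hpowmap,
      trace_pow_pow_of_natCast_eq_zero hr hr0, sub_self]
  rw [← Ideal.mem_span_singleton]
  exact Ideal.Quotient.eq_zero_iff_mem.mp this

end MatrixLemmas

/-- Let `D` be a Dedekind domain with fraction field `F`, `M` a finitely generated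
projective `D`-module, `f : M → M` a `D`-linear map, and `d = r^s` a prime power.
Then `Trace((f ⊗ id_F)^d) - (Trace(f ⊗ id_F))^d` lies in `r·D̄ ∩ F`, where `D̄` is
the integral closure of `D` in an algebraic closure of `F`: that is, in the
algebraic closure it equals `r` times an element integral over `D` (witnessed by a
monic polynomial over `D`). -/
theorem trace_baseChange_pow_prime_pow_congruence
    (D : Type*) [CommRing D] [IsDomain D] [IsDedekindDomain D]
    (M : Type*) [AddCommGroup M] [Module D M]
    [Module.Finite D M] [Module.Projective D M]
    (f : M →ₗ[D] M) (r s : ℕ) (hr : r.Prime) (hs : 1 ≤ s) :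
    ∃ y : AlgebraicClosure (FractionRing D),
      (∃ q : Polynomial D, q.Monic ∧
        Polynomial.eval y
          ((q.map (algebraMap D (FractionRing D))).map
            (algebraMap (FractionRing D) (AlgebraicClosure (FractionRing D)))) = 0) ∧
      algebraMap (FractionRing D) (AlgebraicClosure (FractionRing D))
          (LinearMap.trace (FractionRing D) _ ((f.baseChange (FractionRing D)) ^ (r ^ s)) -
            (LinearMap.trace (FractionRing D) _ (f.baseChange (FractionRing D))) ^ (r ^ s)) =
        (r : AlgebraicClosure (FractionRing D)) * y := by
  classical
  set F := FractionRing D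
  set K := AlgebraicClosure F
  obtain ⟨n, π, hπ⟩ := Module.Finite.exists_fin' D M
  obtain ⟨σ, hσ⟩ := Module.projective_lifting_property π LinearMap.id hπ
  set h : ((Fin n → D) →ₗ[D] (Fin n → D)) := σ ∘ₗ (f ∘ₗ π) with hh
  have hpow : ∀ k : ℕ, 1 ≤ k → h ^ k = σ ∘ₗ ((f ^ k) ∘ₗ π) := by
    intro k hk
    induction k with
    | zero => omega
    | succ k ih =>
      rcases Nat.eq_zero_or_pos k with h0 | hk'
      · subst h0; simp [hh]
      · rw [pow_succ, ih hk', Module.End.mul_eq_comp, hh, pow_succ, Module.End.mul_eq_comp]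
        refine LinearMap.ext fun x => ?_
        simp only [LinearMap.comp_apply, Module.End.mul_apply]
        have h2 : π (σ (f (π x))) = f (π x) := LinearMap.congr_fun hσ (f (π x))
        rw [h2]
  have key : ∀ k : ℕ, 1 ≤ k →
      LinearMap.trace F _ ((f.baseChange F) ^ k) =
        algebraMap D F (LinearMap.trace D _ (h ^ k)) := by
    intro k hk
    rw [← LinearMap.trace_baseChange (h ^ k) F, hpow k hk,
      LinearMap.baseChange_comp, LinearMap.baseChange_comp, LinearMap.trace_comp_comm',
      LinearMap.comp_assoc, ← LinearMap.baseChange_comp, hσ, LinearMap.baseChange_id,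
      LinearMap.comp_id, ← LinearMap.baseChange_pow]
  -- matrix of h
  let b := Pi.basisFun D (Fin n)
  have htr : ∀ k : ℕ, LinearMap.trace D _ (h ^ k) =
      ((LinearMap.toMatrix b b h) ^ k).trace := by
    intro k
    rw [LinearMap.trace_eq_matrix_trace D b, LinearMap.toMatrix_pow]
  obtain ⟨c, hc⟩ := matrix_trace_pow_prime_pow_sub_dvd hr (LinearMap.toMatrix b b h) s
  refine ⟨algebraMap F K (algebraMap D F c), ⟨X - C c, monic_X_sub_C c, by simp; exact sub_self _⟩, ?_⟩
  have h1 : (1 : ℕ) ≤ r ^ s := Nat.one_le_pow _ _ hr.pos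
  have hkey1 : (LinearMap.trace F _ (f.baseChange F)) =
      algebraMap D F (LinearMap.toMatrix b b h).trace := by
    have h2 := key 1 le_rfl
    rw [htr 1] at h2
    simpa only [pow_one] using h2
  rw [key (r ^ s) h1, htr, hkey1, ← map_pow (algebraMap D F),
    ← map_sub (algebraMap D F), hc, _root_.map_mul, _root_.map_mul, map_natCast, map_natCast]

end
end
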